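/- Let c, k, t be positive integers with c ≥ 6, k ≥ t+3, and k ≥ 2t+4, and suppose c ≥ 4·log₂ t + 7 or k ≥ 2t+3. Define θ(c,k,z) = (1/(k-z)!)·∏_{i=z}^{k-1} binom((k-i)c,c), f₀(c,k,t) = (k-t-1)·θ(c,k,t+1) − binom(k-t-1,2)·θ(c,k,t+2), and f₂(c,k,t) = (t+2)·θ(c,k,t+1) − (t+1)(k-t-1)·θ(c,k,t+2). Then f₀(c,k,t) > f₂(c,k,t). -/

import Mathlib

open Finset

/-- `UParts c k ℓ S`: `S` is a family of `ℓ` pairwise disjoint `c`-subsets of `[ck]`. -/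
def UParts (c k ℓ : ℕ) (S : Finset (Finset (Fin (c * k)))) : Prop :=
  S.card = ℓ ∧ (∀ e ∈ S, e.card = c) ∧
    ∀ e ∈ S, ∀ f ∈ S, e ≠ f → Disjoint e f

/-- `UPartition c k F`: `F` is a `c`-uniform partition of `[ck]` into `k` blocks. -/
def UPartition (c k : ℕ) (F : Finset (Finset (Fin (c * k)))) : Prop :=
  UParts c k k F ∧ ∀ x : Fin (c * k), ∃ e ∈ F, x ∈ e

/-- Cross `t`-intersecting families: any two members from different families share `≥ t` blocks. -/
def CrossInt (c k t : ℕ) (F G : Finset (Finset (Finset (Fin (c * k))))) : Prop :=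
  ∀ A ∈ F, ∀ B ∈ G, t ≤ (A ∩ B).card

/-- `S` is a `t`-cover of the family `F`: a family of pairwise disjoint `c`-subsets meeting
every member of `F` in at least `t` blocks. -/
def IsTCover (c k t : ℕ) (F : Finset (Finset (Finset (Fin (c * k)))))
    (S : Finset (Finset (Fin (c * k)))) : Prop :=
  UParts c k S.card S ∧ ∀ A ∈ F, t ≤ (S ∩ A).card

/-- The `t`-covering number: minimum size of a `t`-cover. -/
noncomputable def tau (c k t : ℕ) (F : Finset (Finset (Finset (Fin (c * k))))) : ℕ :=
  sInf {s | ∃ S, IsTCover c k t F S ∧ S.card = s}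

/-- `θ(c,k,z) = (1/(k-z)!) · ∏_{i=z}^{k-1} C((k-i)c, c)`. -/
def theta (c k z : ℕ) : ℚ :=
  (1 / ((k - z).factorial : ℚ)) * ∏ i ∈ Finset.Ico z k, ((((k - i) * c).choose c : ℕ) : ℚ)

/-- `g(c,k,t,z) = θ(c,k,z)·C(z,t)·∏_{j=1}^{z-t}(k-(t+j-1))`. -/
def gfun (c k t z : ℕ) : ℚ :=
  theta c k z * ((z.choose t : ℕ) : ℚ) * ∏ j ∈ Finset.Icc 1 (z - t), ((k - (t + j - 1) : ℕ) : ℚ)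

/-- `f₀(c,k,t) = (k-t-1)·θ(c,k,t+1) − C(k-t-1,2)·θ(c,k,t+2)`. -/
def f0 (c k t : ℕ) : ℚ :=
  ((k - t - 1 : ℕ) : ℚ) * theta c k (t + 1) - (((k - t - 1).choose 2 : ℕ) : ℚ) * theta c k (t + 2)

/-- `f₂(c,k,t) = (t+2)·θ(c,k,t+1) − (t+1)(k-t-1)·θ(c,k,t+2)`. -/
def f2q (c k t : ℕ) : ℚ :=
  ((t : ℚ) + 2) * theta c k (t + 1) - ((t : ℚ) + 1) * ((k - t - 1 : ℕ) : ℚ) * theta c k (t + 2)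




lemma choose_mono_right {n a b : ℕ} (hab : a ≤ b) (hb : 2 * b ≤ n) :
    n.choose a ≤ n.choose b := by
  induction b, hab using Nat.le_induction with
  | base => exact le_refl _
  | succ b hb' ih =>
    refine le_trans (ih (by omega)) (Nat.choose_le_succ_of_lt_half_left ?_)
    omega

lemma key_nat (m c : ℕ) (hm : 4 ≤ m) (hc : 6 ≤ c) :
    m * m.choose 2 < (m * c).choose c := by
  have h1 : m * m.choose 2 < m ^ 3 := by
    rw [Nat.choose_two_right]
    have : m * (m - 1) / 2 < m * m := by
      calc m * (m - 1) / 2 ≤ m * (m - 1) := Nat.div_le_self _ _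
        _ < m * m := by
          exact Nat.mul_lt_mul_of_le_of_lt (le_refl m) (by omega) (by omega)
    calc m * (m * (m - 1) / 2) < m * (m * m) :=
          Nat.mul_lt_mul_of_le_of_lt (le_refl m) this (by omega)
      _ = m ^ 3 := by ring
  have h2 : m ^ 3 ≤ (6 * m).choose 3 := by
    have hd : (6 * m).descFactorial 3 = 6 * ((6 * m).choose 3) := by
      rw [Nat.descFactorial_eq_factorial_mul_choose]; rfl
    have hdv : (6 * m).descFactorial 3 = (6 * m - 2) * ((6 * m - 1) * (6 * m)) := by
      simp [Nat.descFactorial]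
    have : 6 * m ^ 3 ≤ (6 * m - 2) * ((6 * m - 1) * (6 * m)) := by
      obtain ⟨n, rfl⟩ : ∃ n, m = n + 4 := ⟨m - 4, by omega⟩
      have e1 : 6 * (n + 4) - 2 = 6 * n + 22 := by omega
      have e2 : 6 * (n + 4) - 1 = 6 * n + 23 := by omega
      rw [e1, e2]
      nlinarith [sq_nonneg n]
    omega
  have h3 : (6 * m).choose 3 ≤ (m * c).choose 3 :=
    Nat.choose_le_choose 3 (by nlinarith)
  have h4 : (m * c).choose 3 ≤ (m * c).choose c :=
    choose_mono_right (by omega) (by nlinarith)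
  omega



lemma theta_pos (c k z : ℕ) : 0 < theta c k z := by
  unfold theta
  apply mul_pos
  · positivity
  · apply Finset.prod_pos
    intro i hi
    simp only [Finset.mem_Ico] at hi
    have : 0 < ((k - i) * c).choose c := by
      apply Nat.choose_pos
      have : 1 ≤ k - i := by omega
      nlinarith [Nat.zero_le c]
    exact_mod_cast this

lemma theta_succ (c k z : ℕ) (h : z < k) :
    ((k - z : ℕ) : ℚ) * theta c k z = (((k - z) * c).choose c : ℚ) * theta c k (z + 1) := by
  unfold theta
  rw [Finset.prod_eq_prod_Ico_succ_bot h]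
  have hf : (k - z).factorial = (k - z) * (k - (z+1)).factorial := by
    have : k - z = (k - (z+1)) + 1 := by omega
    rw [this, Nat.factorial_succ]
  rw [hf]
  have h1 : ((k - z : ℕ) : ℚ) ≠ 0 := by
    have : 0 < k - z := by omega
    positivity
  push_cast [hf]
  field_simp

theorem stmt15 (c k t : ℕ) (hc : 6 ≤ c) (ht : 1 ≤ t) (hk : t + 3 ≤ k) (hk' : 2 * t + 4 ≤ k)
    (hcond : (4 * Real.logb 2 t + 7 ≤ (c : ℝ)) ∨ 2 * t + 3 ≤ k) :
    f2q c k t < f0 c k t := by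
  obtain ⟨m, hm⟩ : ∃ m, k - t - 1 = m := ⟨_, rfl⟩
  have hm4 : 4 ≤ m := by omega
  have hkk : k - (t + 1) = m := by omega
  have hs := theta_succ c k (t + 1) (by omega : t + 1 < k)
  rw [hkk] at hs
  have hθ2 : 0 < theta c k (t + 2) := theta_pos c k (t + 2)
  have hmpos : (0 : ℚ) < (m : ℚ) := by exact_mod_cast (by omega : 0 < m)
  have hkey : (m : ℚ) * ((m.choose 2 : ℕ) : ℚ) < (((m * c).choose c : ℕ) : ℚ) := by
    exact_mod_cast key_nat m c hm4 hc
  have ef2 : f2q c k t = ((t : ℚ) + 2) * theta c k (t + 1)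
      - ((t : ℚ) + 1) * (m : ℚ) * theta c k (t + 2) := by
    simp only [f2q, hm]
  have ef0 : f0 c k t = (m : ℚ) * theta c k (t + 1)
      - ((m.choose 2 : ℕ) : ℚ) * theta c k (t + 2) := by
    simp only [f0, hm]
  rw [ef2, ef0, ← mul_lt_mul_iff_right₀ hmpos]
  set θ1 := theta c k (t + 1)
  set θ2 := theta c k (t + 2)
  set N : ℚ := (((m * c).choose c : ℕ) : ℚ)
  set C : ℚ := ((m.choose 2 : ℕ) : ℚ)
  have h2 : ((t : ℚ) + 2) * ((m : ℚ) * θ1) = ((t : ℚ) + 2) * (N * θ2) := by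
    rw [hs]
  have h3 : (m : ℚ) * ((m : ℚ) * θ1) = (m : ℚ) * (N * θ2) := by rw [hs]
  have h4 : ((m : ℚ) * C) * θ2 < N * θ2 := mul_lt_mul_of_pos_right hkey hθ2
  have hmtq : (t : ℚ) + 3 ≤ (m : ℚ) := by exact_mod_cast (by omega : t + 3 ≤ m)
  have hNθ : (0 : ℚ) ≤ N * θ2 := mul_nonneg (by positivity) hθ2.le
  have h5 : ((t : ℚ) + 3) * (N * θ2) ≤ (m : ℚ) * (N * θ2) :=
    mul_le_mul_of_nonneg_right hmtq hNθ
  have h6 : (0 : ℚ) ≤ ((t : ℚ) + 1) * (m : ℚ) * (m : ℚ) * θ2 := by positivity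
  nlinarith [h2, h3, h4, h5, h6]
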